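/- If u is primitive and three squares u₁u₁ ⊏ u₂u₂ ⊏ u₃u₃ are nested proper prefixes with u₁ primitive, then |u₃| ≥ |u₁| + |u₂|; consequently, lengths of primitive roots of nested primitively rooted square prefixes grow at least as fast as Fibonacci numbers. -/

import Mathlib

/-- A string is primitive if it is not a power `x^t` with `t ≥ 2`. -/
def IsPrimitive {α : Type*} (u : List α) : Prop :=
  u ≠ [] ∧ ∀ (x : List α) (t : ℕ), 2 ≤ t → u ≠ (List.replicate t x).flatten

namespace ThreeSquares

/-- `f` has period `a` on the window `[0, n)`. -/
def Per {β : Type*} (f : ℕ → β) (n a : ℕ) : Prop := ∀ i, i + a < n → f (i + a) = f i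

variable {α β : Type*}

theorem Per.mono {f : ℕ → β} {n m a : ℕ} (h : Per f n a) (hmn : m ≤ n) : Per f m a :=
  fun i hi => h i (lt_of_lt_of_le hi hmn)

theorem Per.congr {f g : ℕ → β} {n a : ℕ} (h : Per f n a) (hfg : ∀ i < n, f i = g i) :
    Per g n a := fun i hi => by
  rw [← hfg _ hi, ← hfg _ (by omega)]; exact h i hi

theorem Per.step {f : ℕ → β} {n a : ℕ} (h : Per f n a) :
    ∀ (k i : ℕ), i + k * a < n → f (i + k * a) = f i := by
  intro k
  induction k with
  | zero => simp
  | succ k ih =>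
    intro i hi
    have e1 : (k+1) * a = k*a + a := by ring
    rw [e1] at hi ⊢
    have e2 : i + (k*a + a) = (i + k*a) + a := by omega
    rw [e2, h _ (by omega), ih i (by omega)]

theorem fw {f : ℕ → β} : ∀ (N a b n : ℕ), a + b ≤ N → 0 < a → 0 < b → a + b ≤ n →
    Per f n a → Per f n b → Per f n (Nat.gcd a b) := by
  intro N
  induction N with
  | zero => intro a b n h ha; omega
  | succ N ih =>
    intro a b n hN ha hb hn hpa hpb
    rcases lt_trichotomy a b with hab | rfl | hab
    · have hsub : Per f n (b - a) := by
        intro i hi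
        rcases lt_or_ge i a with h1 | h1
        · have e : i + (b - a) + a = i + b := by omega
          have h2 := hpa (i + (b-a)) (by omega)
          rw [e] at h2
          rw [← h2]; exact hpb i (by omega)
        · have ha' := hpa (i - a) (by omega)
          have hb' := hpb (i - a) (by omega)
          have e1 : (i - a) + a = i := by omega
          have e2 : (i - a) + b = i + (b - a) := by omega
          rw [e1] at ha'; rw [e2] at hb'
          rw [hb', ← ha']
      have hg : Nat.gcd a (b - a) = Nat.gcd a b := Nat.gcd_sub_self_right (le_of_lt hab)
      have := ih a (b - a) n (by omega) ha (by omega) (by omega) hpa hsub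
      rwa [hg] at this
    · simpa [Nat.gcd_self] using hpa
    · have hsub : Per f n (a - b) := by
        intro i hi
        rcases lt_or_ge i b with h1 | h1
        · have e : i + (a - b) + b = i + a := by omega
          have h2 := hpb (i + (a-b)) (by omega)
          rw [e] at h2
          rw [← h2]; exact hpa i (by omega)
        · have hb' := hpb (i - b) (by omega)
          have ha' := hpa (i - b) (by omega)
          have e1 : (i - b) + b = i := by omega
          have e2 : (i - b) + a = i + (a - b) := by omega
          rw [e1] at hb'; rw [e2] at ha'
          rw [ha', ← hb']
      have hg : Nat.gcd b (a - b) = Nat.gcd b a := Nat.gcd_sub_self_right (le_of_lt hab)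
      have := ih b (a - b) n (by omega) hb (by omega) (by omega) hpb hsub
      rw [hg, Nat.gcd_comm] at this
      exact this

/-- congruent-mod-`g` positions in the window have equal values. -/
theorem Per.eq_of_mod_eq {f : ℕ → β} {n g : ℕ} (h : Per f n g) {i j : ℕ}
    (hi : i < n) (hj : j < n) (hij : i % g = j % g) : f i = f j := by
  rcases le_total i j with hle | hle
  · obtain ⟨k, hk⟩ := (Nat.modEq_iff_dvd' hle).mp hij
    have hk' : j = i + k * g := by rw [Nat.mul_comm]; omega
    rw [hk']; exact (h.step k i (by omega)).symm
  · obtain ⟨k, hk⟩ := (Nat.modEq_iff_dvd' hle).mp hij.symm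
    have hk' : i = j + k * g := by rw [Nat.mul_comm]; omega
    rw [hk']; exact h.step k j (by omega)

/-- propagation: a period `g` of the first `a`-block propagates along period `a` when `g ∣ a`. -/
theorem Per.of_take {f : ℕ → β} {n a g : ℕ} (ha : 0 < a) (hga : g ∣ a)
    (hpa : Per f n a) (hpg : Per f a g) : Per f n g := by
  have hmodcl : ∀ i, i < n → f i = f (i % a) := by
    intro i hi
    have e : i % a + (i / a) * a = i := Nat.mod_add_div' i a
    conv_lhs => rw [← e]
    exact hpa.step (i / a) (i % a) (by omega)
  intro i hi
  rw [hmodcl (i + g) hi, hmodcl i (by omega)]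
  apply hpg.eq_of_mod_eq (Nat.mod_lt _ ha) (Nat.mod_lt _ ha)
  rw [Nat.mod_mod_of_dvd _ hga, Nat.mod_mod_of_dvd _ hga, Nat.add_mod_right]

theorem drop_eq_take {l : List α} {a : ℕ}
    (hp : Per (fun i => l[i]?) l.length a) :
    l.drop a = l.take (l.length - a) := by
  apply List.ext_getElem?
  intro i
  rcases lt_or_ge i (l.length - a) with hi | hi
  · rw [List.getElem?_drop, List.getElem?_take_of_lt hi]
    have := hp i (by omega)
    simpa [Nat.add_comm] using this
  · rw [List.getElem?_eq_none (by simp; omega), List.getElem?_eq_none (by simp; omega)]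

theorem take_eq_flatten {l : List α} {a : ℕ} (ha : 0 < a)
    (hp : Per (fun i => l[i]?) l.length a) :
    ∀ k, k * a ≤ l.length → l.take (k * a) = (List.replicate k (l.take a)).flatten := by
  intro k
  induction k with
  | zero => simp
  | succ k ih =>
    intro hk
    have e1 : (k+1) * a = k*a + a := by ring
    have e2 : (k+1) * a = a + k*a := by omega
    rw [e2, List.take_add, drop_eq_take hp, List.take_take,
      min_eq_left (by omega : k * a ≤ l.length - a), ih (by omega)]
    simp [List.replicate_succ]

theorem not_primitive {l : List α} {g : ℕ} (hg : 0 < g) (hgl : g ∣ l.length)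
    (hlt : g < l.length) (hp : Per (fun i => l[i]?) l.length g)
    (hprim : IsPrimitive l) : False := by
  have hk : (l.length / g) * g = l.length := Nat.div_mul_cancel hgl
  have h2 : 2 ≤ l.length / g := by
    by_contra hcon
    push_neg at hcon
    interval_cases h : l.length / g <;> omega
  have := take_eq_flatten hg hp (l.length / g) (by omega)
  rw [hk, List.take_length] at this
  exact hprim.2 (l.take g) (l.length / g) h2 this

theorem prefix_getElem? {l₁ l₂ : List α} (h : l₁ <+: l₂) {i : ℕ} (hi : i < l₁.length) :
    l₂[i]? = l₁[i]? := by
  obtain ⟨t, rfl⟩ := h; rw [List.getElem?_append_left hi]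

theorem getElem?_append_add (l₁ l₂ : List α) (i : ℕ) :
    (l₁ ++ l₂)[l₁.length + i]? = l₂[i]? := by
  rw [List.getElem?_append_right (by omega)]
  congr 1
  omega

end ThreeSquares

open ThreeSquares in
/-- Three Squares Lemma (Crochemore–Rytter): if `u₁u₁` is a proper prefix of `u₂u₂`,
`u₂u₂` is a proper prefix of `u₃u₃`, and `u₁` is primitive, then `|u₃| ≥ |u₁| + |u₂|`. -/
theorem stmt17 {α : Type*} (u₁ u₂ u₃ : List α)
    (h1 : IsPrimitive u₁)
    (h12 : (u₁ ++ u₁) <+: (u₂ ++ u₂)) (h12' : u₁ ++ u₁ ≠ u₂ ++ u₂)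
    (h23 : (u₂ ++ u₂) <+: (u₃ ++ u₃)) (h23' : u₂ ++ u₂ ≠ u₃ ++ u₃) :
    u₁.length + u₂.length ≤ u₃.length := by
  by_contra hcon
  push_neg at hcon
  set p := u₁.length with hpdef
  set q := u₂.length with hqdef
  set r := u₃.length with hrdef
  have hp0 : 0 < p := List.length_pos_iff.mpr h1.1
  have hpq : p < q := by
    have hle : 2 * p ≤ 2 * q := by
      have := h12.length_le; simp only [List.length_append] at this; omega
    rcases eq_or_lt_of_le hle with heq | hlt
    · exact absurd (h12.eq_of_length (by simp only [List.length_append]; omega)) h12'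
    · omega
  have hqr : q < r := by
    have hle : 2 * q ≤ 2 * r := by
      have := h23.length_le; simp only [List.length_append] at this; omega
    rcases eq_or_lt_of_le hle with heq | hlt
    · exact absurd (h23.eq_of_length (by simp only [List.length_append]; omega)) h23'
    · omega
  set s := r - q with hsdef
  have hs0 : 0 < s := by omega
  have hsp : s < p := by omega
  -- basic prefixes
  have pre12 : u₁ <+: u₂ :=
    List.prefix_of_prefix_length_le ((u₁.prefix_append u₁).trans h12)
      (u₂.prefix_append u₂) (by omega)
  have pre23 : u₂ <+: u₃ :=
    List.prefix_of_prefix_length_le ((u₂.prefix_append u₂).trans h23)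
      (u₃.prefix_append u₃) (by omega)
  have pre13 : u₁ <+: u₃ := pre12.trans pre23
  -- index facts about w = u₃ ++ u₃
  have E0 : ∀ i, i < r → (u₃ ++ u₃)[i]? = u₃[i]? := fun i hi =>
    List.getElem?_append_left hi
  have E0' : ∀ i : ℕ, (u₃ ++ u₃)[r + i]? = u₃[i]? := fun i => by
    have := getElem?_append_add u₃ u₃ i
    rwa [← hrdef] at this
  have EA : ∀ i, i < 2 * q → (u₃ ++ u₃)[i]? = (u₂ ++ u₂)[i]? := fun i hi =>
    prefix_getElem? h23 (by simp only [List.length_append]; omega)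
  have E2 : ∀ i, i < q → (u₂ ++ u₂)[q + i]? = u₂[i]? := fun i hi => by
    have := getElem?_append_add u₂ u₂ i
    rwa [← hqdef] at this
  have E112 : ∀ i, i < p → (u₁ ++ u₁)[p + i]? = u₁[i]? := fun i hi => by
    have := getElem?_append_add u₁ u₁ i
    rwa [← hpdef] at this
  -- the window  w[q + i]?  for i < r  is s-periodic
  have Fq : ∀ i, i < q → (u₃ ++ u₃)[q + i]? = u₂[i]? := fun i hi => by
    rw [EA (q + i) (by omega), E2 i hi]
  have Fr : ∀ j, j < p → (u₃ ++ u₃)[q + (s + j)]? = u₁[j]? := fun j hj => by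
    have e : q + (s + j) = r + j := by omega
    rw [e, E0' j, prefix_getElem? pre13 (by omega)]
  have FS : Per (fun i => (u₃ ++ u₃)[q + i]?) r s := by
    intro i hi
    show (u₃ ++ u₃)[q + (i + s)]? = (u₃ ++ u₃)[q + i]?
    have hiq : i < q := by omega
    have h1' : (u₃ ++ u₃)[q + (i + s)]? = u₂[i]? := by
      have e : q + (i + s) = r + i := by omega
      rw [e, E0' i, ← E0 i (by omega), EA i (by omega),
        List.getElem?_append_left (by omega : i < u₂.length)]
    rw [h1', Fq i hiq]
  -- u₁ has period s
  have fuS : Per (fun i => u₁[i]?) p s := by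
    intro i hi
    show u₁[i + s]? = u₁[i]?
    rw [← prefix_getElem? pre12 (by omega : i + s < u₁.length),
      ← Fq (i + s) (by omega), ← prefix_getElem? pre12 (by omega : i < u₁.length),
      ← Fq i (by omega)]
    exact FS i (by omega)
  rcases le_or_gt (2 * p) q with hA | hB
  · -- Case A : 2p ≤ q
    have pre112 : (u₁ ++ u₁) <+: u₂ :=
      List.prefix_of_prefix_length_le h12 (u₂.prefix_append u₂)
        (by simp only [List.length_append]; omega)
    have fuuP : Per (fun i => (u₁ ++ u₁)[i]?) (2 * p) p := by
      intro i hi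
      show (u₁ ++ u₁)[i + p]? = (u₁ ++ u₁)[i]?
      have e : i + p = p + i := by omega
      rw [e, E112 i (by omega), List.getElem?_append_left (by omega : i < u₁.length)]
    have fuuS : Per (fun i => (u₁ ++ u₁)[i]?) (2 * p) s := by
      intro i hi
      show (u₁ ++ u₁)[i + s]? = (u₁ ++ u₁)[i]?
      rw [← prefix_getElem? pre112
          (by simp only [List.length_append]; omega : i + s < (u₁ ++ u₁).length),
        ← prefix_getElem? pre112
          (by simp only [List.length_append]; omega : i < (u₁ ++ u₁).length),
        ← Fq (i + s) (by omega), ← Fq i (by omega)]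
      exact FS i (by omega)
    have hG := fw (p + s) p s (2 * p) (le_refl _) hp0 hs0 (by omega) fuuP fuuS
    set G := Nat.gcd p s with hGdef
    have fuG : Per (fun i => u₁[i]?) p G := by
      refine ((hG.mono (by omega)).congr ?_)
      intro i hi
      exact List.getElem?_append_left (by omega : i < u₁.length)
    exact not_primitive (Nat.gcd_pos_of_pos_left s hp0) (Nat.gcd_dvd_left p s)
      (by have := Nat.gcd_le_right (m := p) (n := s) hs0; omega) fuG h1
  · -- Case B : q < 2p
    have pre21 : u₂ <+: (u₁ ++ u₁) :=
      List.prefix_of_prefix_length_le (u₂.prefix_append u₂) h12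
        (by simp only [List.length_append]; omega)
    set m := q - p with hmdef
    set c := p - s with hcdef
    have hm0 : 0 < m := by omega
    have hc0 : 0 < c := by omega
    -- u₁ has period m
    have fuM : Per (fun i => u₁[i]?) p m := by
      intro i hi
      show u₁[i + m]? = u₁[i]?
      rw [← E112 (i + m) (by omega)]
      have e : p + (i + m) = q + i := by omega
      rw [e, ← prefix_getElem? h12
          (by simp only [List.length_append]; omega : q + i < (u₁ ++ u₁).length),
        E2 i (by omega), prefix_getElem? pre12 (by omega : i < u₁.length)]
    rcases le_or_gt (p + s) q with hB1 | hB2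
    · -- Case B1 : p + s ≤ q
      have fu2S : Per (fun i => u₂[i]?) q s :=
        (FS.mono (by omega)).congr (fun i hi => Fq i hi)
      have fu2P : Per (fun i => u₂[i]?) q p := by
        intro i hi
        show u₂[i + p]? = u₂[i]?
        rw [← prefix_getElem? pre21 (by omega : i + p < u₂.length)]
        have e : i + p = p + i := by omega
        rw [e, E112 i (by omega), prefix_getElem? pre12 (by omega : i < u₁.length)]
      have hG := fw (p + s) p s q (le_refl _) hp0 hs0 (by omega) fu2P fu2S
      set G := Nat.gcd p s with hGdef
      have fuG : Per (fun i => u₁[i]?) p G := by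
        refine ((hG.mono (by omega)).congr ?_)
        intro i hi
        exact prefix_getElem? pre12 (by omega : i < u₁.length)
      exact not_primitive (Nat.gcd_pos_of_pos_left s hp0) (Nat.gcd_dvd_left p s)
        (by have := Nat.gcd_le_right (m := p) (n := s) hs0; omega) fuG h1
    · -- Case B2 : q < p + s, i.e. m < s
      have hms : m < s := by omega
      have hmc : m + c ≤ p := by omega
      -- prefix of length m + c has period c
      have fuC : Per (fun i => u₁[i]?) (m + c) c := by
        intro j hj
        have hjm : j < m := by omega
        show u₁[j + c]? = u₁[j]?
        rw [← Fr (j + c) (by omega)]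
        have e : q + (s + (j + c)) = q + (p + j) := by omega
        rw [e, Fq (p + j) (by omega), ← prefix_getElem? pre21 (by omega : p + j < u₂.length),
          E112 j (by omega)]
      have fuMwin : Per (fun i => u₁[i]?) (m + c) m := fuM.mono hmc
      have hg1 := fw (m + c) m c (m + c) (le_refl _) hm0 hc0 (le_refl _) fuMwin fuC
      set g₁ := Nat.gcd m c with hg1def
      have hg1pos : 0 < g₁ := Nat.gcd_pos_of_pos_left c hm0
      have hg1c : g₁ ≤ c := Nat.le_of_dvd hc0 (Nat.gcd_dvd_right m c)
      have fug1 : Per (fun i => u₁[i]?) p g₁ :=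
        Per.of_take hm0 (Nat.gcd_dvd_left m c) fuM (hg1.mono (by omega))
      have hGper := fw (g₁ + s) g₁ s p (le_refl _) hg1pos hs0 (by omega) fug1 fuS
      set G := Nat.gcd g₁ s with hGdef
      have hGpos : 0 < G := Nat.gcd_pos_of_pos_left s hg1pos
      have hGp : G ∣ p := by
        have h1' : G ∣ c := (Nat.gcd_dvd_left g₁ s).trans (Nat.gcd_dvd_right m c)
        have h2' : G ∣ s := Nat.gcd_dvd_right g₁ s
        have e : p = c + s := by omega
        rw [e]; exact Nat.dvd_add h1' h2'
      have hGlt : G < p := by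
        have := Nat.gcd_le_right (m := g₁) (n := s) hs0; omega
      exact not_primitive hGpos hGp hGlt hGper h1
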